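/- With H_C = Σ_{S ⊆ [n]} W(S)·Z_S for real weights W and |γ,β⟩ = exp(−iβH_M)·exp(−iγH_C)·|s⟩, for every K ⊆ [n] the expectation satisfies ⟨γ,β| Z_K |γ,β⟩ = Σ_{L ⊆ K} i^{|L|} · sin(2β)^{|L|} · cos(2β)^{|K|−|L|} · Σ_{𝓕 ∈ 𝓞_K(L)} α_𝓕, where α_𝓕 = ∏_{M ∈ 𝓕} i·sin(−2γ·W(M)) · ∏_{N ∈ 𝓞(L)∖𝓕} cos(2γ·W(N)). -/

import Mathlib

open Finset Matrix
open scoped Classical symmDiff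

namespace QAOAGeneral

variable {n : ℕ}

/-- The Pauli-`Z` operator on the set `S` of qubits: diagonal with entry
`∏_{j ∈ S} (-1)^{x j}` at the basis element `x : Fin n → Bool`. -/
noncomputable def Zop (S : Finset (Fin n)) : Matrix (Fin n → Bool) (Fin n → Bool) ℂ :=
  Matrix.diagonal fun x => ∏ j ∈ S, if x j then (-1 : ℂ) else 1

/-- The Pauli-`X` operator on qubit `j`: the permutation matrix flipping bit `j`. -/
noncomputable def Xop (j : Fin n) : Matrix (Fin n → Bool) (Fin n → Bool) ℂ :=
  Matrix.of fun x y => if y = Function.update x j (!x j) then 1 else 0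

/-- The mixing Hamiltonian `H_M = ∑_j X_j`. -/
noncomputable def HM : Matrix (Fin n → Bool) (Fin n → Bool) ℂ := ∑ j : Fin n, Xop j

/-- The uniform superposition `|s⟩ = 2^{-n/2} ∑_x e_x`. -/
noncomputable def sVec : (Fin n → Bool) → ℂ := fun _ => ((Real.sqrt 2 : ℝ) : ℂ)⁻¹ ^ n

/-- The problem Hamiltonian `H_C = ∑_{S ⊆ [n]} W(S) · Z_S`. -/
noncomputable def HC (W : Finset (Fin n) → ℝ) : Matrix (Fin n → Bool) (Fin n → Bool) ℂ :=
  ∑ S : Finset (Fin n), (W S : ℂ) • Zop S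

/-- The QAOA state `|γ,β⟩ = exp(-iβ H_M) · exp(-iγ H_C) · |s⟩`. -/
noncomputable def qaoaState (W : Finset (Fin n) → ℝ) (γ β : ℝ) : (Fin n → Bool) → ℂ :=
  (NormedSpace.exp ((-Complex.I * (β : ℂ)) • (HM : Matrix (Fin n → Bool) (Fin n → Bool) ℂ)) *
    NormedSpace.exp ((-Complex.I * (γ : ℂ)) • HC W)).mulVec sVec

/-- The expectation `⟨ψ| A |ψ⟩`. -/
noncomputable def expectation (A : Matrix (Fin n → Bool) (Fin n → Bool) ℂ)
    (ψ : (Fin n → Bool) → ℂ) : ℂ :=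
  star ψ ⬝ᵥ A.mulVec ψ

/-- `𝓞(L)`: the sets `M` with nonzero weight whose intersection with `L` is odd. -/
noncomputable def oddInter (W : Finset (Fin n) → ℝ) (L : Finset (Fin n)) :
    Finset (Finset (Fin n)) :=
  Finset.univ.filter fun M => W M ≠ 0 ∧ Odd (M ∩ L).card

instance : Std.Commutative (α := Finset (Fin n)) (· ∆ ·) := ⟨symmDiff_comm⟩
instance : Std.Associative (α := Finset (Fin n)) (· ∆ ·) := ⟨symmDiff_assoc⟩

/-- Iterated symmetric difference `△𝓕` over the members of a family `𝓕`. -/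
def symmDiffAll (F : Finset (Finset (Fin n))) : Finset (Fin n) :=
  F.fold (· ∆ ·) ∅ id

/-- `𝓞_K(L)`: the families `𝓕 ⊆ 𝓞(L)` with `△𝓕 = K`. -/
noncomputable def oddInterTo (W : Finset (Fin n) → ℝ) (K L : Finset (Fin n)) :
    Finset (Finset (Finset (Fin n))) :=
  (oddInter W L).powerset.filter fun F => symmDiffAll F = K

/-- `α_𝓕 = ∏_{M ∈ 𝓕} i·sin(-2γ·W(M)) · ∏_{N ∈ 𝓞(L)∖𝓕} cos(2γ·W(N))`. -/
noncomputable def alpha (W : Finset (Fin n) → ℝ) (γ : ℝ) (L : Finset (Fin n))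
    (F : Finset (Finset (Fin n))) : ℂ :=
  (∏ M ∈ F, Complex.I * (Real.sin (-2 * γ * W M) : ℂ)) *
    ∏ N ∈ oddInter W L \ F, ((Real.cos (2 * γ * W N) : ℝ) : ℂ)

/-! ### Auxiliary definitions -/

/-- The character `χ_S(x) = ∏_{j∈S} (-1)^{x j}`. -/
noncomputable def chi (S : Finset (Fin n)) (x : Fin n → Bool) : ℂ :=
  ∏ j ∈ S, if x j then (-1 : ℂ) else 1

/-- Flip the bits of `x` in `L`. -/
def flipS (L : Finset (Fin n)) (x : Fin n → Bool) : Fin n → Bool :=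
  fun j => if j ∈ L then !x j else x j

/-- The product of the `X_j` for `j ∈ L`. -/
noncomputable def XL (L : Finset (Fin n)) : Matrix (Fin n → Bool) (Fin n → Bool) ℂ :=
  Matrix.of fun x y => if y = flipS L x then 1 else 0

lemma Zop_eq (S : Finset (Fin n)) : Zop S = Matrix.diagonal (chi S) := rfl

/-! ### chi lemmas -/

lemma chi_cases (S : Finset (Fin n)) (x : Fin n → Bool) : chi S x = 1 ∨ chi S x = -1 := by
  classical
  induction S using Finset.induction_on with
  | empty => left; simp [chi]
  | @insert a S ha ih =>
    rw [chi, Finset.prod_insert ha]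
    rcases ih with h | h <;> by_cases hx : x a <;>
      simp [chi] at h ⊢ <;> simp [hx, h]

lemma chi_mul_self (S : Finset (Fin n)) (x : Fin n → Bool) : chi S x * chi S x = 1 := by
  rcases chi_cases S x with h | h <;> rw [h] <;> norm_num

lemma star_chi (S : Finset (Fin n)) (x : Fin n → Bool) :
    (starRingEnd ℂ) (chi S x) = chi S x := by
  rcases chi_cases S x with h | h <;> rw [h] <;> simp

lemma prod_mul_prod_symmDiff (f : Fin n → ℂ) (hf : ∀ j, f j * f j = 1)
    (A B : Finset (Fin n)) :
    (∏ j ∈ A, f j) * (∏ j ∈ B, f j) = ∏ j ∈ A ∆ B, f j := by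
  classical
  have h1 : (∏ j ∈ A, f j) = (∏ j ∈ A \ B, f j) * ∏ j ∈ A ∩ B, f j := by
    rw [← Finset.prod_union (Finset.disjoint_sdiff_inter A B), Finset.sdiff_union_inter]
  have h2 : (∏ j ∈ B, f j) = (∏ j ∈ B \ A, f j) * ∏ j ∈ A ∩ B, f j := by
    rw [Finset.inter_comm A B,
      ← Finset.prod_union (Finset.disjoint_sdiff_inter B A), Finset.sdiff_union_inter]
  have h3 : A ∆ B = (A \ B) ∪ (B \ A) := by
    rw [symmDiff_def, Finset.sup_eq_union]
  have h5 : (∏ j ∈ A ∩ B, f j) * (∏ j ∈ A ∩ B, f j) = 1 := by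
    rw [← Finset.prod_mul_distrib]; exact Finset.prod_eq_one fun j _ => hf j
  rw [h1, h2, h3, Finset.prod_union disjoint_sdiff_sdiff]
  calc ((∏ j ∈ A \ B, f j) * ∏ j ∈ A ∩ B, f j) * ((∏ j ∈ B \ A, f j) * ∏ j ∈ A ∩ B, f j)
      = ((∏ j ∈ A \ B, f j) * ∏ j ∈ B \ A, f j) *
          ((∏ j ∈ A ∩ B, f j) * ∏ j ∈ A ∩ B, f j) := by ring
    _ = (∏ j ∈ A \ B, f j) * ∏ j ∈ B \ A, f j := by rw [h5, mul_one]

lemma chi_mul (A B : Finset (Fin n)) (x : Fin n → Bool) :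
    chi A x * chi B x = chi (A ∆ B) x := by
  refine prod_mul_prod_symmDiff _ (fun j => ?_) A B
  by_cases hx : x j <;> simp [hx]

lemma chi_flip (S L : Finset (Fin n)) (x : Fin n → Bool) :
    chi S (flipS L x) = (-1 : ℂ) ^ (S ∩ L).card * chi S x := by
  classical
  have hsplit : ∀ (T : Finset (Fin n)) (g : Fin n → ℂ),
      (∏ j ∈ T, g j) = (∏ j ∈ T \ L, g j) * ∏ j ∈ T ∩ L, g j := fun T g => by
    rw [← Finset.prod_union (Finset.disjoint_sdiff_inter T L), Finset.sdiff_union_inter]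
  rw [chi, chi, hsplit S fun j => if flipS L x j then (-1 : ℂ) else 1,
    hsplit S fun j => if x j then (-1 : ℂ) else 1]
  have hsd : (∏ j ∈ S \ L, if flipS L x j then (-1 : ℂ) else 1)
      = ∏ j ∈ S \ L, if x j then (-1 : ℂ) else 1 := by
    refine Finset.prod_congr rfl fun j hj => ?_
    have : j ∉ L := (Finset.mem_sdiff.mp hj).2
    simp [flipS, this]
  have hin : (∏ j ∈ S ∩ L, if flipS L x j then (-1 : ℂ) else 1)
      = (-1 : ℂ) ^ (S ∩ L).card * ∏ j ∈ S ∩ L, if x j then (-1 : ℂ) else 1 := by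
    rw [← Finset.prod_const, ← Finset.prod_mul_distrib]
    refine Finset.prod_congr rfl fun j hj => ?_
    have : j ∈ L := (Finset.mem_inter.mp hj).2
    by_cases hx : x j <;> simp [flipS, this, hx]
  rw [hsd, hin]; ring

lemma flipS_flipS (A B : Finset (Fin n)) (x : Fin n → Bool) :
    flipS A (flipS B x) = flipS (A ∆ B) x := by
  funext j
  simp only [flipS, Finset.mem_symmDiff]
  by_cases hA : j ∈ A <;> by_cases hB : j ∈ B <;> simp [hA, hB]

lemma flipS_empty (x : Fin n → Bool) : flipS (∅ : Finset (Fin n)) x = x := by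
  funext j; simp [flipS]

lemma flipS_invol (L : Finset (Fin n)) (x : Fin n → Bool) : flipS L (flipS L x) = x := by
  rw [flipS_flipS, symmDiff_self, Finset.bot_eq_empty, flipS_empty]

lemma sum_chi (T : Finset (Fin n)) :
    ∑ x : Fin n → Bool, chi T x = if T = ∅ then ((2 : ℂ)) ^ n else 0 := by
  classical
  by_cases hT : T = ∅
  · subst hT
    simp [chi, Finset.card_univ]
  · rw [if_neg hT]
    obtain ⟨a, ha⟩ := Finset.nonempty_iff_ne_empty.mpr hT
    have hbij : Function.Bijective (flipS ({a} : Finset (Fin n))) :=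
      Function.Involutive.bijective (fun x => flipS_invol _ x)
    have h1 : ∑ x : Fin n → Bool, chi T x
        = ∑ x : Fin n → Bool, chi T (flipS {a} x) :=
      (Fintype.sum_bijective _ hbij _ _ fun x => rfl).symm
    have h2 : ∀ x : Fin n → Bool, chi T (flipS {a} x) = -chi T x := by
      intro x
      rw [chi_flip]
      have : T ∩ {a} = {a} := by
        rw [Finset.inter_comm]; exact Finset.singleton_inter_of_mem ha
      rw [this, Finset.card_singleton, pow_one]; ring
    have h3 : ∑ x : Fin n → Bool, chi T x = -∑ x : Fin n → Bool, chi T x := by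
      conv_lhs => rw [h1]
      rw [Finset.sum_congr rfl fun x _ => h2 x]
      simp
    have h4 : (2 : ℂ) * ∑ x : Fin n → Bool, chi T x = 0 := by linear_combination h3
    exact (mul_eq_zero.mp h4).resolve_left two_ne_zero

lemma chi_symmDiffAll (F : Finset (Finset (Fin n))) (x : Fin n → Bool) :
    ∏ M ∈ F, chi M x = chi (symmDiffAll F) x := by
  classical
  induction F using Finset.induction_on with
  | empty => simp [symmDiffAll, chi]
  | @insert a F ha ih =>
    rw [Finset.prod_insert ha, ih]
    have hfold : symmDiffAll (insert a F) = a ∆ symmDiffAll F := Finset.fold_insert ha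
    rw [hfold, ← chi_mul]

/-! ### XL lemmas -/

lemma Xop_eq (j : Fin n) : Xop j = XL {j} := by
  have hupd : ∀ x : Fin n → Bool, Function.update x j (!x j) = flipS {j} x := by
    intro x; funext k
    by_cases hk : k = j
    · subst hk; simp [flipS]
    · simp [flipS, hk, Function.update_of_ne hk]
  ext x y
  show (if y = Function.update x j (!x j) then (1 : ℂ) else 0)
      = if y = flipS {j} x then 1 else 0
  rw [hupd]

lemma XL_mul (A B : Finset (Fin n)) : XL A * XL B = XL (A ∆ B) := by
  ext x y
  rw [Matrix.mul_apply]
  simp only [XL, Matrix.of_apply]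
  rw [Finset.sum_eq_single (flipS A x)]
  · have : flipS B (flipS A x) = flipS (A ∆ B) x := by
      rw [flipS_flipS, symmDiff_comm]
    simp [this]
  · intro b _ hb; simp [hb]
  · intro h; exact absurd (Finset.mem_univ _) h

lemma XL_empty : XL (∅ : Finset (Fin n)) = 1 := by
  ext x y
  simp [XL, flipS_empty, Matrix.one_apply, eq_comm]

lemma XL_sq (L : Finset (Fin n)) : XL L * XL L = 1 := by
  rw [XL_mul, symmDiff_self, Finset.bot_eq_empty, XL_empty]

lemma XL_herm (L : Finset (Fin n)) : (XL L)ᴴ = XL L := by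
  ext x y
  simp only [Matrix.conjTranspose_apply, XL, Matrix.of_apply]
  by_cases h : x = flipS L y
  · have h2 : y = flipS L x := by rw [h, flipS_invol]
    rw [if_pos h, if_pos h2, star_one]
  · have h2 : y ≠ flipS L x := fun hy => h (by rw [hy, flipS_invol])
    rw [if_neg h, if_neg h2, star_zero]

lemma Xop_comm (i j : Fin n) : Commute (Xop i) (Xop j) := by
  rw [Xop_eq, Xop_eq]
  show XL {i} * XL {j} = XL {j} * XL {i}
  rw [XL_mul, XL_mul, symmDiff_comm]

lemma Xop_herm (j : Fin n) : (Xop j)ᴴ = Xop j := by rw [Xop_eq, XL_herm]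

lemma HM_herm : (HM : Matrix (Fin n → Bool) (Fin n → Bool) ℂ)ᴴ = HM := by
  rw [HM, Matrix.conjTranspose_sum]
  exact Finset.sum_congr rfl fun j _ => Xop_herm j

/-! ### Zop lemmas -/

lemma Zop_sq (K : Finset (Fin n)) : Zop K * Zop K = 1 := by
  rw [Zop_eq, Matrix.diagonal_mul_diagonal]
  have : (fun x => chi K x * chi K x) = fun _ => (1 : ℂ) := by
    funext x; exact chi_mul_self K x
  rw [this, Matrix.diagonal_one]

lemma Zop_mul_XL (K L : Finset (Fin n)) :
    Zop K * XL L = ((-1 : ℂ) ^ (K ∩ L).card) • (XL L * Zop K) := by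
  ext x y
  rw [Zop_eq, Matrix.smul_apply, Matrix.diagonal_mul, Matrix.mul_diagonal]
  by_cases hxy : y = flipS L x
  · subst hxy
    have hXL1 : XL L x (flipS L x) = 1 := by simp [XL]
    rw [hXL1, chi_flip, smul_eq_mul]
    have h2 : ((-1 : ℂ)) ^ ((K ∩ L).card * 2) = 1 :=
      Even.neg_one_pow ⟨(K ∩ L).card, by ring⟩
    linear_combination (-(chi K x)) * h2
  · simp [XL, hxy]

lemma Zop_mul_Xop_of_mem {K : Finset (Fin n)} {j : Fin n} (hj : j ∈ K) :
    Zop K * Xop j = -(Xop j * Zop K) := by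
  rw [Xop_eq, Zop_mul_XL]
  have : K ∩ {j} = {j} := by
    rw [Finset.inter_comm]; exact Finset.singleton_inter_of_mem hj
  rw [this, Finset.card_singleton, pow_one, neg_one_smul]

lemma Zop_comm_Xop_of_not_mem {K : Finset (Fin n)} {j : Fin n} (hj : j ∉ K) :
    Commute (Zop K) (Xop j) := by
  show Zop K * Xop j = Xop j * Zop K
  rw [Xop_eq, Zop_mul_XL]
  have : K ∩ {j} = ∅ := by
    rw [Finset.inter_comm]; exact Finset.singleton_inter_of_notMem hj
  rw [this, Finset.card_empty, pow_zero, one_smul]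

/-! ### The exponential of an involution -/

lemma exp_smul_invol (θ : ℝ) (A : Matrix (Fin n → Bool) (Fin n → Bool) ℂ) (h : A * A = 1) :
    NormedSpace.exp (((θ : ℂ) * Complex.I) • A)
      = ((Real.cos θ : ℝ) : ℂ) • (1 : Matrix (Fin n → Bool) (Fin n → Bool) ℂ)
        + (Complex.I * ((Real.sin θ : ℝ) : ℂ)) • A := by
  have hA2 : ∀ k : ℕ, A ^ (2 * k) = 1 := fun k => by
    rw [pow_mul, sq, h, one_pow]
  have hA2' : ∀ k : ℕ, A ^ (2 * k + 1) = A := fun k => by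
    rw [pow_succ, hA2, one_mul]
  rw [NormedSpace.exp_eq_tsum ℂ]
  refine (HasSum.even_add_odd ?_ ?_).tsum_eq
  · have hc := (Complex.hasSum_cos (θ : ℂ)).smul_const
      (1 : Matrix (Fin n → Bool) (Fin n → Bool) ℂ)
    rw [← Complex.ofReal_cos] at hc
    convert hc using 1
    · rfl
    funext k
    rw [smul_pow, hA2, smul_smul]
    congr 1
    have hI : ((θ : ℂ) * Complex.I) ^ (2 * k) = (θ : ℂ) ^ (2 * k) * (-1 : ℂ) ^ k := by
      rw [mul_pow, pow_mul Complex.I, Complex.I_sq]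
    have hfac : (((2 * k).factorial : ℕ) : ℂ) ≠ 0 :=
      Nat.cast_ne_zero.mpr (Nat.factorial_ne_zero _)
    rw [hI]
    field_simp
  · have hs := ((Complex.hasSum_sin (θ : ℂ)).mul_left Complex.I).smul_const A
    rw [← Complex.ofReal_sin] at hs
    convert hs using 1
    · rfl
    funext k
    rw [smul_pow, hA2', smul_smul]
    congr 1
    have hI : ((θ : ℂ) * Complex.I) ^ (2 * k + 1)
        = (θ : ℂ) ^ (2 * k + 1) * ((-1 : ℂ) ^ k * Complex.I) := by
      rw [mul_pow, pow_succ Complex.I, pow_mul Complex.I, Complex.I_sq]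
    have hfac : (((2 * k + 1).factorial : ℕ) : ℂ) ≠ 0 :=
      Nat.cast_ne_zero.mpr (Nat.factorial_ne_zero _)
    rw [hI]
    field_simp

/-! ### The exponential of a sum of `Xop`s -/

lemma insert_eq_symmDiff {a : Fin n} {L : Finset (Fin n)} (ha : a ∉ L) :
    ({a} : Finset (Fin n)) ∆ L = insert a L := by
  ext j
  simp only [Finset.mem_symmDiff, Finset.mem_singleton, Finset.mem_insert]
  by_cases hj : j = a
  · subst hj; simp [ha]
  · simp [hj]

lemma exp_XK (θ : ℝ) (K : Finset (Fin n)) :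
    NormedSpace.exp (((θ : ℂ) * Complex.I) • ∑ j ∈ K, Xop j)
      = ∑ L ∈ K.powerset,
          ((Complex.I * ((Real.sin θ : ℝ) : ℂ)) ^ L.card *
            ((Real.cos θ : ℝ) : ℂ) ^ (K.card - L.card)) • XL L := by
  classical
  induction K using Finset.induction_on with
  | empty =>
    simp [NormedSpace.exp_zero, XL_empty]
  | @insert a K ha ih =>
    rw [Finset.sum_insert ha, smul_add]
    rw [Matrix.exp_add_of_commute _ _
      (((Commute.sum_right _ _ _ fun j _ => Xop_comm a j).smul_left _).smul_right _)]
    rw [ih, exp_smul_invol θ (Xop a) (by rw [Xop_eq]; exact XL_sq {a})]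
    rw [add_mul, Finset.mul_sum, Finset.mul_sum]
    have hterm1 : ∀ L ∈ K.powerset,
        (((Real.cos θ : ℝ) : ℂ) • (1 : Matrix (Fin n → Bool) (Fin n → Bool) ℂ)) *
            (((Complex.I * ((Real.sin θ : ℝ) : ℂ)) ^ L.card *
              ((Real.cos θ : ℝ) : ℂ) ^ (K.card - L.card)) • XL L)
          = (((Complex.I * ((Real.sin θ : ℝ) : ℂ)) ^ L.card *
              ((Real.cos θ : ℝ) : ℂ) ^ ((insert a K).card - L.card)) • XL L) := by
      intro L hL
      have hLK : L ⊆ K := Finset.mem_powerset.mp hL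
      have hcard : (insert a K).card - L.card = (K.card - L.card) + 1 := by
        rw [Finset.card_insert_of_notMem ha]
        have := Finset.card_le_card hLK
        omega
      rw [smul_mul_assoc, one_mul, smul_smul, hcard, pow_succ]
      ring_nf
    have hterm2 : ∀ L ∈ K.powerset,
        ((Complex.I * ((Real.sin θ : ℝ) : ℂ)) • Xop a) *
            (((Complex.I * ((Real.sin θ : ℝ) : ℂ)) ^ L.card *
              ((Real.cos θ : ℝ) : ℂ) ^ (K.card - L.card)) • XL L)
          = (((Complex.I * ((Real.sin θ : ℝ) : ℂ)) ^ (insert a L).card *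
              ((Real.cos θ : ℝ) : ℂ) ^ ((insert a K).card - (insert a L).card)) •
              XL (insert a L)) := by
      intro L hL
      have hLK : L ⊆ K := Finset.mem_powerset.mp hL
      have haL : a ∉ L := fun hmem => ha (hLK hmem)
      have hXL : Xop a * XL L = XL (insert a L) := by
        rw [Xop_eq, XL_mul, insert_eq_symmDiff haL]
      have hcardL : (insert a L).card = L.card + 1 := Finset.card_insert_of_notMem haL
      have hcardK : (insert a K).card - (insert a L).card = K.card - L.card := by
        rw [Finset.card_insert_of_notMem ha, hcardL]
        omega
      rw [smul_mul_assoc, mul_smul_comm, smul_smul, hXL]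
      congr 1
      rw [hcardK, hcardL, pow_succ]
      ring
    rw [Finset.sum_congr rfl hterm1, Finset.sum_congr rfl hterm2]
    rw [Finset.powerset_insert, Finset.sum_union, Finset.sum_image]
    · intro L hL L' hL' hins
      have haL : a ∉ L := fun hmem => ha (Finset.mem_powerset.mp hL hmem)
      have haL' : a ∉ L' := fun hmem => ha (Finset.mem_powerset.mp hL' hmem)
      have := congrArg (fun s => Finset.erase s a) hins
      simpa [Finset.erase_insert haL, Finset.erase_insert haL'] using this
    · rw [Finset.disjoint_left]
      intro L hL hLim
      obtain ⟨L', _, rfl⟩ := Finset.mem_image.mp hLim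
      exact ha (Finset.mem_powerset.mp hL (Finset.mem_insert_self a L'))

/-! ### Conjugating `Zop K` by the mixing exponential -/

lemma expM_conj (β : ℝ) (K : Finset (Fin n)) :
    (NormedSpace.exp ((-Complex.I * (β : ℂ)) •
        (HM : Matrix (Fin n → Bool) (Fin n → Bool) ℂ)))ᴴ *
      (Zop K * NormedSpace.exp ((-Complex.I * (β : ℂ)) • HM))
    = (∑ L ∈ K.powerset,
        ((Complex.I * ((Real.sin (2 * β) : ℝ) : ℂ)) ^ L.card *
          ((Real.cos (2 * β) : ℝ) : ℂ) ^ (K.card - L.card)) • XL L) * Zop K := by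
  classical
  set c : ℂ := -Complex.I * (β : ℂ) with hc
  set A : Matrix (Fin n → Bool) (Fin n → Bool) ℂ := ∑ j ∈ K, Xop j with hA
  set B : Matrix (Fin n → Bool) (Fin n → Bool) ℂ := ∑ j ∈ Kᶜ, Xop j with hB
  have hsum : (HM : Matrix (Fin n → Bool) (Fin n → Bool) ℂ) = A + B := by
    rw [HM, hA, hB, Finset.sum_add_sum_compl]
  have hAB : Commute A B :=
    Commute.sum_right _ _ _ fun j _ => Commute.sum_left _ _ _ fun i _ => Xop_comm i j
  have hstarc : star c = -c := by
    rw [hc]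
    simp [Complex.ext_iff]
  -- `star` of the exponential
  have hstar : (NormedSpace.exp (c • (HM : Matrix (Fin n → Bool) (Fin n → Bool) ℂ)))ᴴ
      = NormedSpace.exp ((-c) • (HM : Matrix (Fin n → Bool) (Fin n → Bool) ℂ)) := by
    rw [← Matrix.exp_conjTranspose]
    congr 1
    rw [Matrix.conjTranspose_smul, HM_herm, hstarc]
  -- splitting into `A` and `B` parts
  have hsplit : ∀ e : ℂ, NormedSpace.exp (e • (HM : Matrix (Fin n → Bool) (Fin n → Bool) ℂ))
      = NormedSpace.exp (e • A) * NormedSpace.exp (e • B) := by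
    intro e
    rw [hsum, smul_add, Matrix.exp_add_of_commute _ _ ((hAB.smul_left e).smul_right e)]
  -- `Zop K` anticommutes with `A`
  have hZA : Zop K * A = -(A * Zop K) := by
    rw [hA, Finset.mul_sum, Finset.sum_mul, ← Finset.sum_neg_distrib]
    exact Finset.sum_congr rfl fun j hj => Zop_mul_Xop_of_mem hj
  -- `Zop K` commutes with `B`
  have hZB : Commute (Zop K) B :=
    Commute.sum_right _ _ _ fun j hj => Zop_comm_Xop_of_not_mem (Finset.mem_compl.mp hj)
  set eA := NormedSpace.exp (c • A) with heA
  set eAn := NormedSpace.exp ((-c) • A) with heAn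
  set eB := NormedSpace.exp (c • B) with heB
  set eBn := NormedSpace.exp ((-c) • B) with heBn
  -- swap lemma: `Zop K * exp (c • A) = exp (-c • A) • Zop K`
  set ZU : (Matrix (Fin n → Bool) (Fin n → Bool) ℂ)ˣ :=
    ⟨Zop K, Zop K, Zop_sq K, Zop_sq K⟩ with hZU
  have hconj : (ZU : Matrix (Fin n → Bool) (Fin n → Bool) ℂ) * (c • A) *
      (↑(ZU⁻¹) : Matrix (Fin n → Bool) (Fin n → Bool) ℂ) = (-c) • A := by
    show Zop K * (c • A) * Zop K = (-c) • A
    rw [mul_smul_comm, smul_mul_assoc]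
    have : Zop K * A * Zop K = -A := by
      rw [hZA, neg_mul, mul_assoc, Zop_sq, mul_one]
    rw [this, smul_neg, neg_smul]
  have hswap : Zop K * eA = eAn * Zop K := by
    have h := Matrix.exp_units_conj ZU (c • A)
    rw [hconj] at h
    have hZUv : (ZU : Matrix (Fin n → Bool) (Fin n → Bool) ℂ) = Zop K := rfl
    have hZUi : (↑(ZU⁻¹) : Matrix (Fin n → Bool) (Fin n → Bool) ℂ) = Zop K := rfl
    rw [hZUv, hZUi] at h
    rw [heA, heAn, h, mul_assoc (Zop K * NormedSpace.exp (c • A)) (Zop K) (Zop K),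
      Zop_sq, mul_one]
  have hZb : Zop K * eB = eB * Zop K := ((hZB.smul_right c).exp_right)
  have hexpB : eBn * eB = 1 := by
    rw [heBn, heB,
      ← Matrix.exp_add_of_commute _ _ (((Commute.refl B).smul_left _).smul_right _),
      ← add_smul, neg_add_cancel, zero_smul, NormedSpace.exp_zero]
  have hexpAA : eAn * eAn
      = NormedSpace.exp ((((2 * β : ℝ) : ℂ) * Complex.I) • A) := by
    rw [heAn,
      ← Matrix.exp_add_of_commute _ _ (((Commute.refl A).smul_left _).smul_right _),
      ← add_smul]
    congr 2
    rw [hc]; push_cast; ring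
  have hcommAB : Commute eBn eAn :=
    (((hAB.symm.smul_left (-c)).smul_right (-c)).exp)
  have hgoal : eAn * (eBn * (Zop K * (eA * eB)))
      = NormedSpace.exp ((((2 * β : ℝ) : ℂ) * Complex.I) • A) * Zop K := by
    rw [← mul_assoc (Zop K) eA eB, hswap, mul_assoc eAn (Zop K) eB, hZb,
      ← mul_assoc eBn eAn (eB * Zop K), hcommAB.eq, mul_assoc eAn eBn (eB * Zop K),
      ← mul_assoc eBn eB (Zop K), hexpB, one_mul, ← mul_assoc eAn eAn (Zop K), hexpAA]
  calc (NormedSpace.exp (c • HM))ᴴ * (Zop K * NormedSpace.exp (c • HM))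
      = eAn * (eBn * (Zop K * (eA * eB))) := by
        rw [hstar, hsplit (-c), hsplit c, heA, heAn, heB, heBn]
        simp only [mul_assoc]
    _ = NormedSpace.exp ((((2 * β : ℝ) : ℂ) * Complex.I) • A) * Zop K := hgoal
    _ = _ := by rw [hA, exp_XK (2 * β) K]

/-! ### The diagonal exponential -/

noncomputable def Cf (W : Finset (Fin n) → ℝ) (x : Fin n → Bool) : ℂ :=
  ∑ S : Finset (Fin n), (W S : ℂ) * chi S x

noncomputable def dvec (W : Finset (Fin n) → ℝ) (γ : ℝ) (x : Fin n → Bool) : ℂ :=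
  Complex.exp ((-Complex.I * (γ : ℂ)) * Cf W x)

lemma HC_eq (W : Finset (Fin n) → ℝ) : HC W = Matrix.diagonal (Cf W) := by
  classical
  ext x y
  by_cases hxy : x = y
  · subst hxy
    simp [HC, Zop_eq, Matrix.sum_apply, Matrix.smul_apply, Matrix.diagonal_apply_eq, Cf,
      smul_eq_mul]
  · simp [HC, Zop_eq, Matrix.sum_apply, Matrix.smul_apply, Matrix.diagonal_apply_ne _ hxy,
      smul_eq_mul]

lemma expC_eq (W : Finset (Fin n) → ℝ) (γ : ℝ) :
    NormedSpace.exp ((-Complex.I * (γ : ℂ)) • HC W) = Matrix.diagonal (dvec W γ) := by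
  rw [HC_eq, ← Matrix.diagonal_smul, Matrix.exp_diagonal]
  have hfun : NormedSpace.exp ((-Complex.I * (γ : ℂ)) • Cf W) = dvec W γ := by
    funext x
    rw [Pi.coe_exp, Pi.smul_apply, smul_eq_mul]
    simp only [dvec]
    rw [Complex.exp_eq_exp_ℂ]
  rw [hfun]

/-! ### Scalar computations -/

lemma star_Cf (W : Finset (Fin n) → ℝ) (x : Fin n → Bool) :
    (starRingEnd ℂ) (Cf W x) = Cf W x := by
  rw [Cf, map_sum]
  refine Finset.sum_congr rfl fun S _ => ?_
  rw [_root_.map_mul, Complex.conj_ofReal, star_chi]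

lemma exp_chi (θ : ℝ) (z : ℂ) (hz : z = 1 ∨ z = -1) :
    Complex.exp (((θ : ℝ) : ℂ) * z * Complex.I)
      = Complex.I * ((Real.sin θ : ℝ) : ℂ) * z + ((Real.cos θ : ℝ) : ℂ) := by
  rcases hz with rfl | rfl
  · rw [mul_one, Complex.exp_mul_I, ← Complex.ofReal_cos, ← Complex.ofReal_sin]; ring
  · rw [show ((θ : ℝ) : ℂ) * (-1) * Complex.I = ((-θ : ℝ) : ℂ) * Complex.I by push_cast; ring,
      Complex.exp_mul_I, ← Complex.ofReal_cos, ← Complex.ofReal_sin, Real.cos_neg, Real.sin_neg]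
    push_cast; ring

lemma pair_eq (W : Finset (Fin n) → ℝ) (γ : ℝ) (L : Finset (Fin n)) (x : Fin n → Bool) :
    star (dvec W γ x) * dvec W γ (flipS L x)
      = ∏ M ∈ oddInter W L,
          (Complex.I * ((Real.sin (2 * γ * W M) : ℝ) : ℂ) * chi M x
            + ((Real.cos (2 * γ * W M) : ℝ) : ℂ)) := by
  classical
  have h1 : star (dvec W γ x) = Complex.exp ((Complex.I * (γ : ℂ)) * Cf W x) := by
    simp only [dvec]
    rw [Complex.star_def, ← Complex.exp_conj]
    congr 1
    rw [_root_.map_mul, _root_.map_mul, _root_.map_neg, Complex.conj_I, Complex.conj_ofReal,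
      star_Cf]
    ring
  have hdiff : Cf W x - Cf W (flipS L x)
      = ∑ M ∈ oddInter W L, (W M : ℂ) * (2 * chi M x) := by
    have hzero : ∀ S ∈ (Finset.univ : Finset (Finset (Fin n))), S ∉ oddInter W L →
        (W S : ℂ) * chi S x - (W S : ℂ) * chi S (flipS L x) = 0 := by
      intro S _ hS
      rw [oddInter, Finset.mem_filter] at hS
      push_neg at hS
      by_cases hW : W S = 0
      · rw [hW]; simp
      · have heven : ¬ Odd ((S ∩ L).card) := hS (Finset.mem_univ S) hW
        rw [chi_flip, (Nat.not_odd_iff_even.mp heven).neg_one_pow, one_mul, sub_self]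
    rw [Cf, Cf, ← Finset.sum_sub_distrib,
      ← Finset.sum_subset (Finset.subset_univ (oddInter W L)) hzero]
    refine Finset.sum_congr rfl fun M hM => ?_
    have hodd : Odd ((M ∩ L).card) := ((Finset.mem_filter.mp hM).2).2
    rw [chi_flip, hodd.neg_one_pow]
    ring
  have h2 : Complex.I * (γ : ℂ) * Cf W x + (-Complex.I * (γ : ℂ)) * Cf W (flipS L x)
      = ∑ M ∈ oddInter W L, (((2 * γ * W M : ℝ) : ℂ) * chi M x * Complex.I) := by
    have hrw : Complex.I * (γ : ℂ) * Cf W x + (-Complex.I * (γ : ℂ)) * Cf W (flipS L x)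
        = Complex.I * (γ : ℂ) * (Cf W x - Cf W (flipS L x)) := by ring
    rw [hrw, hdiff, Finset.mul_sum]
    refine Finset.sum_congr rfl fun M _ => ?_
    push_cast
    ring
  rw [h1, dvec, ← Complex.exp_add, h2, Complex.exp_sum]
  exact Finset.prod_congr rfl fun M _ => exp_chi (2 * γ * W M) (chi M x) (chi_cases M x)

lemma sVec_sq (x y : Fin n → Bool) :
    star (sVec x) * sVec y = ((2 : ℂ)⁻¹) ^ n := by
  simp only [sVec, star_pow, star_inv₀]
  rw [Complex.star_def, Complex.conj_ofReal, ← mul_pow, ← mul_inv, ← Complex.ofReal_mul,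
    Real.mul_self_sqrt (by norm_num)]
  norm_num

/-! ### The quadratic form for a single `L` -/

lemma quad_L (W : Finset (Fin n) → ℝ) (γ : ℝ) {K L : Finset (Fin n)} (hL : L ⊆ K) :
    star sVec ⬝ᵥ (((Matrix.diagonal (dvec W γ))ᴴ *
        ((XL L * Zop K) * Matrix.diagonal (dvec W γ))).mulVec sVec)
      = (-1 : ℂ) ^ L.card * ∑ F ∈ oddInterTo W K L,
          (∏ M ∈ F, Complex.I * ((Real.sin (2 * γ * W M) : ℝ) : ℂ)) *
            ∏ N ∈ oddInter W L \ F, ((Real.cos (2 * γ * W N) : ℝ) : ℂ) := by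
  classical
  set d := dvec W γ with hd
  have hM : ∀ x y : Fin n → Bool,
      ((Matrix.diagonal d)ᴴ * ((XL L * Zop K) * Matrix.diagonal d)) x y
        = (if y = flipS L x then 1 else 0) * (star (d x) * (chi K y * d y)) := by
    intro x y
    rw [Matrix.diagonal_conjTranspose, Matrix.diagonal_mul, Matrix.mul_diagonal, Zop_eq,
      Matrix.mul_diagonal]
    simp only [XL, Matrix.of_apply, Pi.star_apply]
    ring
  have hKL : K ∩ L = L := Finset.inter_eq_right.mpr hL
  have hchiflip : ∀ x : Fin n → Bool, chi K (flipS L x) = (-1 : ℂ) ^ L.card * chi K x := by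
    intro x; rw [chi_flip, hKL]
  have hstep1 : star sVec ⬝ᵥ
        (((Matrix.diagonal d)ᴴ * ((XL L * Zop K) * Matrix.diagonal d)).mulVec sVec)
      = ∑ x : Fin n → Bool,
          ((2 : ℂ)⁻¹) ^ n * ((star (d x) * d (flipS L x)) * chi K (flipS L x)) := by
    simp only [dotProduct, Matrix.mulVec, Pi.star_apply, Finset.mul_sum]
    refine Finset.sum_congr rfl fun x _ => ?_
    have hsum : ∀ y : Fin n → Bool, star (sVec x) *
          (((Matrix.diagonal d)ᴴ * ((XL L * Zop K) * Matrix.diagonal d)) x y * sVec y)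
        = if y = flipS L x
            then ((2 : ℂ)⁻¹) ^ n * ((star (d x) * d y) * chi K y) else 0 := by
      intro y
      rw [hM x y]
      by_cases hy : y = flipS L x
      · rw [if_pos hy, if_pos hy]
        have hsv := sVec_sq x y
        calc star (sVec x) * (1 * (star (d x) * (chi K y * d y)) * sVec y)
            = (star (sVec x) * sVec y) * ((star (d x) * d y) * chi K y) := by ring
          _ = _ := by rw [hsv]
      · rw [if_neg hy, if_neg hy]
        ring
    rw [Finset.sum_congr rfl fun y _ => hsum y, Finset.sum_ite_eq' Finset.univ (flipS L x)]
    rw [if_pos (Finset.mem_univ _)]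
  rw [hstep1]
  have hsplit2 : ∀ x : Fin n → Bool,
      ((2 : ℂ)⁻¹) ^ n * ((star (d x) * d (flipS L x)) * chi K (flipS L x))
        = ∑ F ∈ (oddInter W L).powerset,
            (((-1 : ℂ) ^ L.card *
              ((∏ M ∈ F, Complex.I * ((Real.sin (2 * γ * W M) : ℝ) : ℂ)) *
                ∏ N ∈ oddInter W L \ F, ((Real.cos (2 * γ * W N) : ℝ) : ℂ))) *
              (((2 : ℂ)⁻¹) ^ n * chi (symmDiffAll F ∆ K) x)) := by
    intro x
    rw [hd, pair_eq, hchiflip, Finset.prod_add, Finset.sum_mul, Finset.mul_sum]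
    refine Finset.sum_congr rfl fun F _ => ?_
    rw [Finset.prod_mul_distrib, chi_symmDiffAll, ← chi_mul]
    ring
  rw [Finset.sum_congr rfl fun x _ => hsplit2 x, Finset.sum_comm]
  have hinner : ∀ F ∈ (oddInter W L).powerset,
      (∑ x : Fin n → Bool,
        (((-1 : ℂ) ^ L.card *
          ((∏ M ∈ F, Complex.I * ((Real.sin (2 * γ * W M) : ℝ) : ℂ)) *
            ∏ N ∈ oddInter W L \ F, ((Real.cos (2 * γ * W N) : ℝ) : ℂ))) *
          (((2 : ℂ)⁻¹) ^ n * chi (symmDiffAll F ∆ K) x)))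
      = (-1 : ℂ) ^ L.card *
          (if symmDiffAll F = K then
            ((∏ M ∈ F, Complex.I * ((Real.sin (2 * γ * W M) : ℝ) : ℂ)) *
              ∏ N ∈ oddInter W L \ F, ((Real.cos (2 * γ * W N) : ℝ) : ℂ)) else 0) := by
    intro F _
    rw [← Finset.mul_sum, ← Finset.mul_sum, sum_chi]
    by_cases hFK : symmDiffAll F = K
    · have hbot : symmDiffAll F ∆ K = ∅ := by
        rw [Finset.symmDiff_eq_empty]
        exact hFK
      have h2n : ((2 : ℂ)⁻¹) ^ n * (2 : ℂ) ^ n = 1 := by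
        rw [← mul_pow]
        norm_num
      rw [if_pos hbot, if_pos hFK, h2n, mul_one]
    · have hne : ¬ (symmDiffAll F ∆ K = ∅) := by
        rw [Finset.symmDiff_eq_empty]
        exact hFK
      rw [if_neg hne, if_neg hFK]
      ring
  rw [Finset.sum_congr rfl hinner, ← Finset.mul_sum]
  congr 1
  rw [oddInterTo, Finset.sum_filter]

/-! ### Parity bookkeeping -/

lemma card_symmDiff_mod (A B : Finset (Fin n)) :
    (A ∆ B).card % 2 = (A.card + B.card) % 2 := by
  have h1 : (A ∆ B).card = (A \ B).card + (B \ A).card := by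
    rw [symmDiff_def, Finset.sup_eq_union, Finset.card_union_of_disjoint disjoint_sdiff_sdiff]
  have h2 := Finset.card_sdiff_add_card_inter A B
  have h3 := Finset.card_sdiff_add_card_inter B A
  rw [Finset.inter_comm] at h3
  omega

lemma symmAll_parity (L : Finset (Fin n)) (F : Finset (Finset (Fin n)))
    (h : ∀ M ∈ F, Odd ((M ∩ L).card)) :
    (symmDiffAll F ∩ L).card % 2 = F.card % 2 := by
  classical
  induction F using Finset.induction_on with
  | empty => simp [symmDiffAll]
  | @insert a F ha ih =>
    have hfold : symmDiffAll (insert a F) = a ∆ symmDiffAll F := Finset.fold_insert ha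
    rw [hfold]
    have hdistr : (a ∆ symmDiffAll F) ∩ L = (a ∩ L) ∆ (symmDiffAll F ∩ L) := by
      ext j
      simp only [Finset.mem_inter, Finset.mem_symmDiff]
      tauto
    rw [hdistr, card_symmDiff_mod]
    have hodd : (a ∩ L).card % 2 = 1 := Nat.odd_iff.mp (h a (Finset.mem_insert_self a F))
    have hih := ih fun M hM => h M (Finset.mem_insert_of_mem hM)
    rw [Finset.card_insert_of_notMem ha]
    omega

lemma alpha_sum (W : Finset (Fin n) → ℝ) (γ : ℝ) {K L : Finset (Fin n)} (hL : L ⊆ K) :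
    (-1 : ℂ) ^ L.card * ∑ F ∈ oddInterTo W K L,
        (∏ M ∈ F, Complex.I * ((Real.sin (2 * γ * W M) : ℝ) : ℂ)) *
          ∏ N ∈ oddInter W L \ F, ((Real.cos (2 * γ * W N) : ℝ) : ℂ)
      = ∑ F ∈ oddInterTo W K L, alpha W γ L F := by
  classical
  rw [Finset.mul_sum]
  refine Finset.sum_congr rfl fun F hF => ?_
  rw [oddInterTo, Finset.mem_filter, Finset.mem_powerset] at hF
  obtain ⟨hFsub, hFK⟩ := hF
  have hparity : (-1 : ℂ) ^ L.card = (-1 : ℂ) ^ F.card := by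
    have h1 := symmAll_parity L F fun M hM => ((Finset.mem_filter.mp (hFsub hM)).2).2
    rw [hFK, Finset.inter_eq_right.mpr hL] at h1
    rcases Nat.even_or_odd L.card with he | ho
    · have hf : Even F.card := by
        rw [Nat.even_iff] at he ⊢
        omega
      rw [he.neg_one_pow, hf.neg_one_pow]
    · have hf : Odd F.card := by
        rw [Nat.odd_iff] at ho ⊢
        omega
      rw [ho.neg_one_pow, hf.neg_one_pow]
  have hsin : ∀ M ∈ F, Complex.I * ((Real.sin (-2 * γ * W M) : ℝ) : ℂ)
      = -(Complex.I * ((Real.sin (2 * γ * W M) : ℝ) : ℂ)) := by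
    intro M _
    rw [show -2 * γ * W M = -(2 * γ * W M) by ring, Real.sin_neg]
    push_cast
    ring
  rw [alpha, Finset.prod_congr rfl hsin]
  have hneg : ∏ M ∈ F, -(Complex.I * ((Real.sin (2 * γ * W M) : ℝ) : ℂ))
      = (-1 : ℂ) ^ F.card * ∏ M ∈ F, Complex.I * ((Real.sin (2 * γ * W M) : ℝ) : ℂ) := by
    rw [← Finset.prod_const, ← Finset.prod_mul_distrib]
    exact Finset.prod_congr rfl fun M _ => by ring
  rw [hneg, hparity]
  ring

/-! ### Linearity of the quadratic form -/

lemma dot_sum_smul {ι : Type*} (s : Finset ι) (c : ι → ℂ)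
    (Ms : ι → Matrix (Fin n → Bool) (Fin n → Bool) ℂ) (v : (Fin n → Bool) → ℂ) :
    star v ⬝ᵥ ((∑ i ∈ s, c i • Ms i).mulVec v)
      = ∑ i ∈ s, c i * (star v ⬝ᵥ (Ms i).mulVec v) := by
  classical
  have h1 : (∑ i ∈ s, c i • Ms i).mulVec v = ∑ i ∈ s, c i • ((Ms i).mulVec v) := by
    induction s using Finset.cons_induction with
    | empty => simp [Matrix.zero_mulVec]
    | cons a s ha ih =>
      rw [Finset.sum_cons, Finset.sum_cons, Matrix.add_mulVec, ih,
        Matrix.smul_mulVec]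
  rw [h1]
  simp only [dotProduct, Finset.sum_apply, Pi.smul_apply, smul_eq_mul, Finset.mul_sum]
  rw [Finset.sum_comm]
  refine Finset.sum_congr rfl fun i _ => ?_
  exact Finset.sum_congr rfl fun x _ => by ring

/-- the expectation of `Z_K` in the QAOA state for a general diagonal
problem Hamiltonian `H_C = ∑_S W(S)·Z_S`. -/
theorem zK_expectation (W : Finset (Fin n) → ℝ) (γ β : ℝ) (K : Finset (Fin n)) :
    expectation (Zop K) (qaoaState W γ β) =
      ∑ L ∈ K.powerset, Complex.I ^ L.card * ((Real.sin (2 * β) : ℝ) : ℂ) ^ L.card *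
        ((Real.cos (2 * β) : ℝ) : ℂ) ^ (K.card - L.card) *
        ∑ F ∈ oddInterTo W K L, alpha W γ L F := by
  classical
  rw [expectation, qaoaState, expC_eq]
  set D := Matrix.diagonal (dvec W γ) with hD
  set eM := NormedSpace.exp ((-Complex.I * (β : ℂ)) •
    (HM : Matrix (Fin n → Bool) (Fin n → Bool) ℂ)) with heM
  rw [Matrix.star_mulVec, Matrix.mulVec_mulVec, ← Matrix.dotProduct_mulVec,
    Matrix.mulVec_mulVec]
  have hmat : (eM * D)ᴴ * (Zop K * (eM * D))
      = ∑ L ∈ K.powerset,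
          ((Complex.I * ((Real.sin (2 * β) : ℝ) : ℂ)) ^ L.card *
            ((Real.cos (2 * β) : ℝ) : ℂ) ^ (K.card - L.card)) •
          (Dᴴ * ((XL L * Zop K) * D)) := by
    rw [Matrix.conjTranspose_mul]
    calc Dᴴ * eMᴴ * (Zop K * (eM * D))
        = Dᴴ * ((eMᴴ * (Zop K * eM)) * D) := by simp only [mul_assoc]
      _ = Dᴴ * (((∑ L ∈ K.powerset,
            ((Complex.I * ((Real.sin (2 * β) : ℝ) : ℂ)) ^ L.card *
              ((Real.cos (2 * β) : ℝ) : ℂ) ^ (K.card - L.card)) • XL L) * Zop K) * D) := by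
          rw [heM, expM_conj]
      _ = _ := by
          rw [Finset.sum_mul, Finset.sum_mul, Finset.mul_sum]
          refine Finset.sum_congr rfl fun L _ => ?_
          rw [smul_mul_assoc, smul_mul_assoc, mul_smul_comm]
  rw [hmat, dot_sum_smul]
  refine Finset.sum_congr rfl fun L hL => ?_
  have hLK : L ⊆ K := Finset.mem_powerset.mp hL
  rw [hD, quad_L W γ hLK, alpha_sum W γ hLK, mul_pow]

end QAOAGeneral
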